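/- If X has the GLL density with parameters θ > 0, λ ≥ 0, p ≥ 0, then for any positive integer r, E[(log X)^r] = (−1)^r · (p+1)(p+2)⋯(p+r) · (1+r+p+λθ) / (θ^r·(1+p+λθ)). -/

import Mathlib

open Real MeasureTheory

/-- The generalized Log-Lindley (GLL) density. -/
noncomputable def gll (θ lam p x : ℝ) : ℝ :=
  θ ^ (2 + p) / (Real.Gamma (1 + p) * (1 + p + lam * θ)) *
    (-Real.log x) ^ p * (lam - Real.log x) * x ^ (θ - 1)

lemma gll_deriv : ∀ t ∈ Set.Ioi (0:ℝ), HasDerivWithinAt (fun t : ℝ => Real.exp (-t))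
    (Real.exp (-t) * (-1)) (Set.Ioi 0) t := by
  intro t _
  exact ((Real.hasDerivAt_exp (-t)).comp t (hasDerivAt_neg t)).hasDerivWithinAt

lemma gll_inj : Set.InjOn (fun t : ℝ => Real.exp (-t)) (Set.Ioi 0) :=
  (Real.exp_injective.comp neg_injective).injOn

lemma gll_img : (fun t : ℝ => Real.exp (-t)) '' Set.Ioi 0 = Set.Ioo (0:ℝ) 1 := by
  ext x
  constructor
  · rintro ⟨t, ht, rfl⟩
    exact ⟨Real.exp_pos _, Real.exp_lt_one_iff.mpr (by simpa using ht)⟩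
  · rintro ⟨hx0, hx1⟩
    exact ⟨-Real.log x, neg_pos.mpr (Real.log_neg hx0 hx1), by simp [Real.exp_log hx0]⟩

lemma gll_subst (F : ℝ → ℝ) :
    ∫ x in Set.Ioo (0:ℝ) 1, F x
      = ∫ t in Set.Ioi (0:ℝ), Real.exp (-t) * F (Real.exp (-t)) := by
  rw [← gll_img, integral_image_eq_integral_abs_deriv_smul measurableSet_Ioi gll_deriv gll_inj]
  refine setIntegral_congr_fun measurableSet_Ioi fun t _ => ?_
  rw [abs_mul, abs_of_pos (Real.exp_pos _)]
  simp [smul_eq_mul]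

lemma gll_pt (b θ : ℝ) : ∀ t ∈ Set.Ioi (0:ℝ),
    Real.exp (-t) * ((-Real.log (Real.exp (-t))) ^ b * (Real.exp (-t)) ^ (θ - 1))
      = t ^ b * Real.exp (-(θ * t)) := by
  intro t ht
  rw [Real.log_exp, neg_neg, Real.rpow_def_of_pos (Real.exp_pos _), Real.log_exp]
  rw [show Real.exp (-t) * (t ^ b * Real.exp (-t * (θ - 1)))
      = t ^ b * (Real.exp (-t) * Real.exp (-t * (θ - 1))) by ring, ← Real.exp_add]
  ring_nf

lemma gll_key (b θ : ℝ) (hb : 0 ≤ b) (hθ : 0 < θ) :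
    ∫ x in Set.Ioo (0:ℝ) 1, (-Real.log x) ^ b * x ^ (θ - 1)
      = (1 / θ) ^ (b + 1) * Real.Gamma (b + 1) := by
  rw [gll_subst, setIntegral_congr_fun measurableSet_Ioi (gll_pt b θ)]
  have := Real.integral_rpow_mul_exp_neg_mul_Ioi (a := b + 1) (r := θ) (by linarith) hθ
  simpa using this

lemma gll_int (b θ : ℝ) (hb : 0 ≤ b) (hθ : 0 < θ) :
    IntegrableOn (fun x => (-Real.log x) ^ b * x ^ (θ - 1)) (Set.Ioo (0:ℝ) 1) := by
  rw [← gll_img,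
    integrableOn_image_iff_integrableOn_abs_deriv_smul measurableSet_Ioi gll_deriv gll_inj]
  have h : IntegrableOn (fun t : ℝ => t ^ b * Real.exp (-(θ * t))) (Set.Ioi 0) := by
    have := integrableOn_rpow_mul_exp_neg_mul_rpow (p := 1) (s := b) (b := θ)
      (by linarith) zero_lt_one hθ
    refine this.congr_fun (fun t ht => ?_) measurableSet_Ioi
    simp only [Real.rpow_one, neg_mul]
  refine h.congr_fun (fun t ht => ?_) measurableSet_Ioi
  rw [smul_eq_mul, abs_mul, abs_of_pos (Real.exp_pos _)]
  simp only [abs_neg, abs_one, mul_one]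
  exact (gll_pt b θ t ht).symm

lemma gll_Gamma_prod (p : ℝ) (hp : 0 ≤ p) (r : ℕ) :
    Real.Gamma (p + 1 + r) = (∏ i ∈ Finset.range r, (p + 1 + (i : ℝ))) * Real.Gamma (p + 1) := by
  induction r with
  | zero => simp
  | succ n ih =>
    have hne : p + 1 + (n:ℝ) ≠ 0 := by positivity
    rw [show p + 1 + ((n + 1 : ℕ) : ℝ) = (p + 1 + (n:ℝ)) + 1 by push_cast; ring,
      Real.Gamma_add_one hne, ih, Finset.prod_range_succ]
    ring

lemma gll_arith (G D P S T1 T2 th tr lam q e : ℝ) (hG : G ≠ 0) (hD : D ≠ 0) (htr : tr ≠ 0)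
    (hT1 : T1 ≠ 0) (hT2 : T2 ≠ 0)
    (h1 : S * T1⁻¹ = th * tr⁻¹) (h2 : S * T2⁻¹ = tr⁻¹) :
    S / (G * D) * e * (lam * (T1⁻¹ * (P * G)) + T2⁻¹ * (q * (P * G)))
      = e * P * (q + lam * th) / (tr * D) := by
  have h1' : S * tr = th * T1 := by field_simp at h1; linarith
  have h2' : S * tr = T2 := by field_simp at h2; linarith
  have e1 : S / (G * D) * e * (lam * (T1⁻¹ * (P * G)) + T2⁻¹ * (q * (P * G)))
      = e * P / D * (lam * (S * T1⁻¹) + q * (S * T2⁻¹)) := by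
    field_simp
  rw [e1, h1, h2]
  field_simp
  ring

theorem gll_log_power_moment (θ lam p : ℝ) (hθ : 0 < θ) (hlam : 0 ≤ lam) (hp : 0 ≤ p)
    (r : ℕ) (hr : 1 ≤ r) :
    ∫ x in Set.Ioo (0:ℝ) 1, (Real.log x) ^ r * gll θ lam p x =
      (-1) ^ r * (∏ i ∈ Finset.range r, (p + 1 + (i : ℝ))) * (1 + (r : ℝ) + p + lam * θ) /
        (θ ^ r * (1 + p + lam * θ)) := by
  set C : ℝ := θ ^ (2 + p) / (Real.Gamma (1 + p) * (1 + p + lam * θ)) with hC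
  have hstep : ∫ x in Set.Ioo (0:ℝ) 1, (Real.log x) ^ r * gll θ lam p x
      = ∫ x in Set.Ioo (0:ℝ) 1, (C * (-1) ^ r) *
          (lam * ((-Real.log x) ^ (p + (r:ℝ)) * x ^ (θ - 1))
            + ((-Real.log x) ^ (p + (r:ℝ) + 1) * x ^ (θ - 1))) := by
    refine setIntegral_congr_fun measurableSet_Ioo fun x hx => ?_
    have hlx : 0 < -Real.log x := neg_pos.mpr (Real.log_neg hx.1 hx.2)
    have h1 : (Real.log x) ^ r = (-1) ^ r * (-Real.log x) ^ r := by
      rw [← mul_pow, neg_one_mul, neg_neg]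
    have h2 : (-Real.log x) ^ r = (-Real.log x) ^ (r:ℝ) := (Real.rpow_natCast _ r).symm
    have h3 : (-Real.log x) ^ (p + (r:ℝ)) = (-Real.log x) ^ p * (-Real.log x) ^ (r:ℝ) :=
      Real.rpow_add hlx p r
    have h4 : (-Real.log x) ^ (p + (r:ℝ) + 1) = (-Real.log x) ^ (p + (r:ℝ)) * (-Real.log x) := by
      rw [Real.rpow_add_one (ne_of_gt hlx)]
    unfold gll
    rw [h1, h2, ← hC, h4, h3]
    ring
  have hpr : (0:ℝ) ≤ p + (r:ℝ) := by positivity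
  have i1 := gll_int (p + (r:ℝ)) θ hpr hθ
  have i2 := gll_int (p + (r:ℝ) + 1) θ (by positivity) hθ
  rw [hstep, integral_const_mul, integral_add (i1.const_mul lam) i2, integral_const_mul,
    gll_key _ _ hpr hθ, gll_key _ _ (by positivity) hθ]
  have hG1 : Real.Gamma (p + (r:ℝ) + 1)
      = (∏ i ∈ Finset.range r, (p + 1 + (i : ℝ))) * Real.Gamma (p + 1) := by
    rw [show p + (r:ℝ) + 1 = p + 1 + (r:ℝ) by ring, gll_Gamma_prod p hp r]
  have hG2 : Real.Gamma (p + (r:ℝ) + 1 + 1) = (p + (r:ℝ) + 1) * Real.Gamma (p + (r:ℝ) + 1) :=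
    Real.Gamma_add_one (by positivity)
  have hGpos : 0 < Real.Gamma (p + 1) := Real.Gamma_pos_of_pos (by positivity)
  have hDpos : (0:ℝ) < 1 + p + lam * θ := by positivity
  have hi : ∀ a : ℝ, (1 / θ) ^ a = (θ ^ a)⁻¹ := fun a => by
    rw [one_div, ← Real.inv_rpow hθ.le]
  have h2' : θ ^ (2 + p) * (θ ^ (p + (r:ℝ) + 1 + 1))⁻¹ = ((θ:ℝ) ^ r)⁻¹ := by
    rw [← Real.rpow_neg hθ.le, ← Real.rpow_add hθ,
      show 2 + p + -(p + (r:ℝ) + 1 + 1) = -(r:ℝ) by ring,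
      Real.rpow_neg hθ.le, Real.rpow_natCast]
  have h1' : θ ^ (2 + p) * (θ ^ (p + (r:ℝ) + 1))⁻¹ = θ * ((θ:ℝ) ^ r)⁻¹ := by
    rw [← Real.rpow_neg hθ.le, ← Real.rpow_add hθ,
      show 2 + p + -(p + (r:ℝ) + 1) = 1 + -(r:ℝ) by ring,
      Real.rpow_add hθ, Real.rpow_one, Real.rpow_neg hθ.le, Real.rpow_natCast]
  have harith := gll_arith (Real.Gamma (p + 1)) (1 + p + lam * θ)
    (∏ i ∈ Finset.range r, (p + 1 + (i : ℝ))) (θ ^ (2 + p))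
    (θ ^ (p + (r:ℝ) + 1)) (θ ^ (p + (r:ℝ) + 1 + 1)) θ ((θ:ℝ) ^ r) lam
    (p + (r:ℝ) + 1) ((-1) ^ r) hGpos.ne' hDpos.ne' (pow_ne_zero r hθ.ne')
    (Real.rpow_pos_of_pos hθ _).ne' (Real.rpow_pos_of_pos hθ _).ne' h1' h2'
  rw [hG2, hG1, hi, hi, hC, show (1:ℝ) + p = p + 1 by ring]
  linear_combination harith
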